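/- Let H be a complex Hilbert space, L and M closed linear subspaces of H, Q = L ∩ M, and suppose the orthogonal complements L ⊖ Q of Q in L and M ⊖ Q of Q in M are both nontrivial. If the inclination c(L,M) satisfies c(L,M) < 1, then the sum L + M = { x ∈ H : x = x_L + x_M, x_L ∈ L, x_M ∈ M } is a closed subset of H (hence a closed linear subspace of H). -/

import Mathlib

open scoped InnerProductSpace Pointwise

/-- The inclination `c(L,M)` of two subspaces `L`, `M` of a complex Hilbert space:
the supremum of `|⟪u,v⟫| / (‖u‖‖v‖)` over nonzero `u ∈ L ⊖ Q` and nonzero `v ∈ M ⊖ Q`,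
where `Q = L ⊓ M`. -/
noncomputable def inclination {H : Type*} [NormedAddCommGroup H] [InnerProductSpace ℂ H]
    (L M : Submodule ℂ H) : ℝ :=
  sSup {r : ℝ | ∃ u ∈ L ⊓ (L ⊓ M)ᗮ, ∃ v ∈ M ⊓ (L ⊓ M)ᗮ,
    u ≠ 0 ∧ v ≠ 0 ∧ r = ‖⟪u, v⟫_ℂ‖ / (‖u‖ * ‖v‖)}

theorem stmt_0 {H : Type*} [NormedAddCommGroup H] [InnerProductSpace ℂ H] [CompleteSpace H]
    (L M : Submodule ℂ H) (hL : IsClosed (L : Set H)) (hM : IsClosed (M : Set H))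
    (hLQ : ∃ u ∈ L ⊓ (L ⊓ M)ᗮ, u ≠ 0) (hMQ : ∃ v ∈ M ⊓ (L ⊓ M)ᗮ, v ≠ 0)
    (hc : inclination L M < 1) :
    IsClosed ((L : Set H) + (M : Set H)) := by
  set c := inclination L M with hcdef
  set Q : Submodule ℂ H := L ⊓ M with hQdef
  set S : Set ℝ := {r : ℝ | ∃ u ∈ L ⊓ Qᗮ, ∃ v ∈ M ⊓ Qᗮ,
    u ≠ 0 ∧ v ≠ 0 ∧ r = ‖⟪u, v⟫_ℂ‖ / (‖u‖ * ‖v‖)} with hSdef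
  have hbdd : BddAbove S := by
    refine ⟨1, ?_⟩
    rintro r ⟨u, hu, v, hv, hu0, hv0, rfl⟩
    rw [div_le_one (mul_pos (norm_pos_iff.mpr hu0) (norm_pos_iff.mpr hv0))]
    simpa using norm_inner_le_norm (𝕜 := ℂ) u v
  have hc0 : 0 ≤ c := by
    obtain ⟨u, hu, hu0⟩ := hLQ
    obtain ⟨v, hv, hv0⟩ := hMQ
    have hm : ‖⟪u, v⟫_ℂ‖ / (‖u‖ * ‖v‖) ∈ S := ⟨u, hu, v, hv, hu0, hv0, rfl⟩
    have hcS : c = sSup S := rfl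
    rw [hcS]
    exact le_trans (by positivity) (le_csSup hbdd hm)
  have hkey : ∀ u ∈ L ⊓ Qᗮ, ∀ v ∈ M ⊓ Qᗮ, ‖⟪u, v⟫_ℂ‖ ≤ c * (‖u‖ * ‖v‖) := by
    intro u hu v hv
    by_cases hu0 : u = 0
    · simp [hu0]
    by_cases hv0 : v = 0
    · simp [hv0]
    have hm : ‖⟪u, v⟫_ℂ‖ / (‖u‖ * ‖v‖) ∈ S := ⟨u, hu, v, hv, hu0, hv0, rfl⟩
    have hpos : 0 < ‖u‖ * ‖v‖ :=
      mul_pos (norm_pos_iff.mpr hu0) (norm_pos_iff.mpr hv0)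
    have hle := le_csSup hbdd hm
    have hcS : c = sSup S := rfl
    rw [div_le_iff₀ hpos, ← hcS] at hle
    linarith [hle]
  -- Q is closed, so has orthogonal projection
  have hQc : IsClosed (Q : Set H) := by
    have : (Q : Set H) = (L : Set H) ∩ (M : Set H) := rfl
    rw [this]; exact hL.inter hM
  haveI : CompleteSpace Q := hQc.completeSpace_coe
  -- inner product bound for x ∈ L, v ∈ M ⊓ Qᗮ
  have hkey2 : ∀ x ∈ L, ∀ v ∈ M ⊓ Qᗮ, ‖⟪x, v⟫_ℂ‖ ≤ c * (‖x‖ * ‖v‖) := by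
    intro x hx v hv
    set q : H := (Submodule.orthogonalProjectionOnto Q x : H) with hq
    have hqQ : q ∈ Q := (Submodule.orthogonalProjectionOnto Q x).2
    have huQ : x - q ∈ Qᗮ := Submodule.sub_starProjection_mem_orthogonal (K := Q) x
    have huL : x - q ∈ L := L.sub_mem hx hqQ.1
    have hqv : ⟪q, v⟫_ℂ = 0 := hv.2 q hqQ
    have hxv : ⟪x, v⟫_ℂ = ⟪x - q, v⟫_ℂ := by
      rw [inner_sub_left, hqv, sub_zero]
    have hqu : ⟪q, x - q⟫_ℂ = 0 := huQ q hqQ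
    have hnorm : ‖x - q‖ ≤ ‖x‖ := by
      have h1 : ‖q + (x - q)‖ * ‖q + (x - q)‖ = ‖q‖ * ‖q‖ + ‖x - q‖ * ‖x - q‖ :=
        norm_add_sq_eq_norm_sq_add_norm_sq_of_inner_eq_zero q (x - q) hqu
      have h2 : q + (x - q) = x := by abel
      rw [h2] at h1
      nlinarith [norm_nonneg q, norm_nonneg (x - q), norm_nonneg x]
    calc ‖⟪x, v⟫_ℂ‖ = ‖⟪x - q, v⟫_ℂ‖ := by rw [hxv]
      _ ≤ c * (‖x - q‖ * ‖v‖) := hkey _ ⟨huL, huQ⟩ _ hv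
      _ ≤ c * (‖x‖ * ‖v‖) := by
          exact mul_le_mul_of_nonneg_left
            (mul_le_mul_of_nonneg_right hnorm (norm_nonneg v)) hc0
  -- main estimate
  have hest : ∀ x ∈ L, ∀ v ∈ M ⊓ Qᗮ, (1 - c) * (‖x‖ ^ 2 + ‖v‖ ^ 2) ≤ ‖x + v‖ ^ 2 := by
    intro x hx v hv
    have h1 : ‖x + v‖ ^ 2 = ‖x‖ ^ 2 + 2 * Complex.re ⟪x, v⟫_ℂ + ‖v‖ ^ 2 :=
      norm_add_sq (𝕜 := ℂ) x v
    have h2 : |Complex.re ⟪x, v⟫_ℂ| ≤ ‖⟪x, v⟫_ℂ‖ := Complex.abs_re_le_norm _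
    have h3 := hkey2 x hx v hv
    have h4 : -(c * (‖x‖ * ‖v‖)) ≤ Complex.re ⟪x, v⟫_ℂ := by
      have := neg_abs_le (Complex.re ⟪x, v⟫_ℂ)
      linarith
    nlinarith [sq_nonneg (‖x‖ - ‖v‖), norm_nonneg x, norm_nonneg v]
  -- reduce to L + M'
  set M' : Submodule ℂ H := M ⊓ Qᗮ with hM'def
  have hM'c : IsClosed (M' : Set H) := by
    have h : (M' : Set H) = (M : Set H) ∩ (Qᗮ : Set H) := rfl
    rw [h]; exact hM.inter Q.isClosed_orthogonal
  haveI : CompleteSpace L := hL.completeSpace_coe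
  haveI : CompleteSpace M' := hM'c.completeSpace_coe
  have hsum : (L : Set H) + (M : Set H) = (L : Set H) + (M' : Set H) := by
    apply Set.Subset.antisymm
    · rintro z ⟨x, hx, m, hm, rfl⟩
      refine ⟨x + (Submodule.orthogonalProjectionOnto Q m : H), ?_,
        m - (Submodule.orthogonalProjectionOnto Q m : H), ?_, ?_⟩
      · exact L.add_mem hx ((Submodule.orthogonalProjectionOnto Q m).2).1
      · exact ⟨M.sub_mem hm ((Submodule.orthogonalProjectionOnto Q m).2).2,
          Submodule.sub_starProjection_mem_orthogonal (K := Q) m⟩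
      · abel
    · rintro z ⟨x, hx, m, hm, rfl⟩
      exact ⟨x, hx, m, hm.1, rfl⟩
  rw [hsum]
  set d : ℝ := 1 - c with hd
  have hd0 : 0 < d := by simp only [hd]; linarith
  have K0 : 0 < Real.sqrt d := Real.sqrt_pos.mpr hd0
  have key : ∀ a ∈ L, ∀ b ∈ M', max ‖a‖ ‖b‖ ≤ (Real.sqrt d)⁻¹ * ‖a + b‖ := by
    intro a ha b hb
    have h1 := hest a ha b hb
    have hm2 : (max ‖a‖ ‖b‖) ^ 2 ≤ ‖a‖ ^ 2 + ‖b‖ ^ 2 := by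
      rcases le_total ‖a‖ ‖b‖ with h | h
      · rw [max_eq_right h]; nlinarith [norm_nonneg a]
      · rw [max_eq_left h]; nlinarith [norm_nonneg b]
    have h3 : (Real.sqrt d * max ‖a‖ ‖b‖) ^ 2 ≤ ‖a + b‖ ^ 2 := by
      rw [mul_pow, Real.sq_sqrt hd0.le]
      nlinarith [hm2, h1, hd0]
    have h4 := Real.sqrt_le_sqrt h3
    rw [Real.sqrt_sq (by positivity), Real.sqrt_sq (norm_nonneg _)] at h4
    rw [inv_mul_eq_div, le_div_iff₀ K0]
    linarith [h4]
  let f : (L × M') →L[ℂ] H := (L.subtypeL).coprod (M'.subtypeL)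
  have hrange : Set.range f = (L : Set H) + (M' : Set H) := by
    ext z
    constructor
    · rintro ⟨⟨x, v⟩, rfl⟩
      exact ⟨x, x.2, v, v.2, rfl⟩
    · rintro ⟨x, hx, v, hv, rfl⟩
      exact ⟨(⟨x, hx⟩, ⟨v, hv⟩), rfl⟩
  rw [← hrange]
  have hal : AntilipschitzWith ((Real.sqrt d)⁻¹).toNNReal f := by
    apply AntilipschitzWith.of_le_mul_dist
    intro p q'
    have ha : ((p.1 : H) - (q'.1 : H)) ∈ L := L.sub_mem p.1.2 q'.1.2
    have hb : ((p.2 : H) - (q'.2 : H)) ∈ M' := M'.sub_mem p.2.2 q'.2.2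
    have hk := key _ ha _ hb
    have hfp : f p - f q' = ((p.1 : H) - (q'.1 : H)) + ((p.2 : H) - (q'.2 : H)) := by
      simp only [f, ContinuousLinearMap.coprod_apply, Submodule.coe_subtypeL',
        Submodule.subtype_apply]
      abel
    rw [← hfp] at hk
    rw [Prod.dist_eq, Subtype.dist_eq, Subtype.dist_eq, dist_eq_norm, dist_eq_norm,
      dist_eq_norm, Real.coe_toNNReal _ (by positivity)]
    exact hk
  exact hal.isClosed_range f.uniformContinuous
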